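/- arXiv:1502.06563 — 2 statements merged into one kernel-verified Lean document; each statement's English description precedes it below -/
import Mathlib

section
/- For each c ∈ ℝ, the convex set of functions dominated by L+c is stable under the invariant mean: let λ be the normalized Haar probability measure on the compact topological group Γ_H, and for u ∈ C⁰(M,ℝ) define (Mu)(x) = ∫_{Γ_H} u(g(x)) dλ(g). If u ≺ L+c, then Mu is a continuous Γ_H-invariant function and Mu ≺ L+c. -/
open scoped Manifold
open Bundle Set

noncomputable section

namespace WeakKAM

variable (n : ℕ) {M : Type*} [TopologicalSpace M] [ChartedSpace (EuclideanSpace ℝ (Fin n)) M]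
  [IsManifold (𝓡 n) ((⊤ : ℕ∞) : WithTop ℕ∞) M]

instance (x : M) : NormedAddCommGroup (TangentSpace (𝓡 n) x) :=
  inferInstanceAs (NormedAddCommGroup (EuclideanSpace ℝ (Fin n)))

instance (x : M) : NormedSpace ℝ (TangentSpace (𝓡 n) x) :=
  inferInstanceAs (NormedSpace ℝ (EuclideanSpace ℝ (Fin n)))

abbrev Cot (x : M) : Type _ := TangentSpace (𝓡 n) x →L[ℝ] ℝ

/-- The cotangent bundle of `M`, as a bundle of continuous linear maps. -/
abbrev CotBundle : M → Type _ :=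
  fun x : M => TangentSpace (𝓡 n) x →SL[RingHom.id ℝ] Bundle.Trivial M ℝ x

/-- Smoothness (`C^∞`) of a Hamiltonian, as a function on the total space of the
cotangent bundle. -/
def SmoothHam (H : ∀ x : M, Cot n x → ℝ) : Prop :=
  ContMDiff ((𝓡 n).prod 𝓘(ℝ, EuclideanSpace ℝ (Fin n) →L[ℝ] ℝ)) 𝓘(ℝ, ℝ) (⊤ : ℕ∞)
    (fun q : TotalSpace (EuclideanSpace ℝ (Fin n) →L[ℝ] ℝ) (CotBundle n (M := M)) =>
      H q.proj q.2)

def vel (γ : ℝ → M) (s : ℝ) : TangentSpace (𝓡 n) (γ s) :=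
  mfderiv 𝓘(ℝ, ℝ) (𝓡 n) γ s (1 : ℝ)

/-- A piecewise `C¹` curve `γ : [a,b] → M`. -/
def PiecewiseC1On (γ : ℝ → M) (a b : ℝ) : Prop :=
  ContinuousOn γ (Icc a b) ∧
    ∃ (k : ℕ) (t : Fin (k + 1) → ℝ), StrictMono t ∧ t 0 = a ∧ t (Fin.last k) = b ∧
      ∀ i : Fin k, ContMDiffOn 𝓘(ℝ, ℝ) (𝓡 n) 1 γ (Icc (t i.castSucc) (t i.succ))

/-- The action of a curve `γ : [a,b] → M` for the Lagrangian `L`. -/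
def action (L : ∀ x : M, TangentSpace (𝓡 n) x → ℝ) (γ : ℝ → M) (a b : ℝ) : ℝ :=
  ∫ s in a..b, L (γ s) (vel n γ s)

/-- `u ≺ L + c` : `u` is dominated by `L + c`. -/
def Dominated (L : ∀ x : M, TangentSpace (𝓡 n) x → ℝ) (c : ℝ) (u : M → ℝ) : Prop :=
  ∀ (γ : ℝ → M) (a b : ℝ), a ≤ b → PiecewiseC1On n γ a b →
    u (γ b) - u (γ a) ≤ action n L γ a b + c * (b - a)

/-- Backward weak KAM solution for the value `c`. -/
def BackwardWeakKAM (L : ∀ x : M, TangentSpace (𝓡 n) x → ℝ) (c : ℝ) (u : M → ℝ) : Prop :=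
  Dominated n L c u ∧
    ∀ x : M, ∃ γ : ℝ → M, γ 0 = x ∧ ContMDiffOn 𝓘(ℝ, ℝ) (𝓡 n) 1 γ (Iic 0) ∧
      ∀ t : ℝ, 0 ≤ t → u x - u (γ (-t)) = action n L γ (-t) 0 + c * t

/-- Forward weak KAM solution for the value `c`. -/
def ForwardWeakKAM (L : ∀ x : M, TangentSpace (𝓡 n) x → ℝ) (c : ℝ) (u : M → ℝ) : Prop :=
  Dominated n L c u ∧
    ∀ x : M, ∃ γ : ℝ → M, γ 0 = x ∧ ContMDiffOn 𝓘(ℝ, ℝ) (𝓡 n) 1 γ (Ici 0) ∧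
      ∀ t : ℝ, 0 ≤ t → u (γ t) - u x = action n L γ 0 t + c * t

/-- `g` is a `C¹` diffeomorphism of `M`. -/
def IsC1Diffeo (g : M → M) : Prop :=
  ∃ h : M → M, Function.LeftInverse h g ∧ Function.RightInverse h g ∧
    ContMDiff (𝓡 n) (𝓡 n) 1 g ∧ ContMDiff (𝓡 n) (𝓡 n) 1 h

/-- `g` belongs to the symmetry group `Γ_H` of `H`. -/
def IsSymmetry (H : ∀ x : M, Cot n x → ℝ) (g : M → M) : Prop :=
  IsC1Diffeo n g ∧ ∀ (x : M) (p : Cot n (g x)),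
    H (g x) p = H x (p.comp (mfderiv (𝓡 n) (𝓡 n) g x))

/-- The symmetry group `Γ_H` of `H`, as a subset of `C⁰(M,M)` (with the compact-open
topology, i.e. the topology of uniform convergence). -/
def GammaH (H : ∀ x : M, Cot n x → ℝ) : Set C(M, M) :=
  {g : C(M, M) | IsSymmetry n H ⇑g}

/-- The identity component `Γ_H⁰` of the symmetry group of `H`. -/
def GammaH0 (H : ∀ x : M, Cot n x → ℝ) : Set C(M, M) :=
  connectedComponentIn (GammaH n H) (ContinuousMap.id M)

def StrictlyConvexFib (H : ∀ x : M, Cot n x → ℝ) : Prop :=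
  ∀ (x : M) (p q : Cot n x), q ≠ 0 → 0 < iteratedFDeriv ℝ 2 (H x) p ![q, q]

def Superlinear (H : ∀ x : M, Cot n x → ℝ) : Prop :=
  ∀ K : ℝ, ∃ C : ℝ, ∀ (x : M) (p : Cot n x), K * ‖p‖ + C ≤ H x p

def Lag (H : ∀ x : M, Cot n x → ℝ) (x : M) (v : TangentSpace (𝓡 n) x) : ℝ :=
  ⨆ p : Cot n x, (p v - H x p)
set_option linter.unusedSectionVars false
lemma lag_comp_eq (H : ∀ x : M, Cot n x → ℝ) {g : M → M} (hgsym : IsSymmetry n H g)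
    (x : M) (v : TangentSpace (𝓡 n) x) :
    Lag n H (g x) (mfderiv (𝓡 n) (𝓡 n) g x v) = Lag n H x v := by
  obtain ⟨⟨h, hlh, hrh, hg, hh⟩, hsym⟩ := hgsym
  have hgd := hg.mdifferentiable one_ne_zero
  have hhd := hh.mdifferentiable one_ne_zero
  have key : ∀ w : TangentSpace (𝓡 n) x,
      mfderiv (𝓡 n) (𝓡 n) h (g x) (mfderiv (𝓡 n) (𝓡 n) g x w) = w := by
    intro w
    have h1 := mfderiv_comp (I := 𝓡 n) (I' := 𝓡 n) (I'' := 𝓡 n) x (hhd (g x)) (hgd x)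
    have h2 : mfderiv (𝓡 n) (𝓡 n) (h ∘ g) x w = w := by
      rw [hlh.comp_eq_id, mfderiv_id]; rfl
    rw [h1] at h2
    exact h2
  have hsurj : Function.Surjective
      (fun p : Cot n (g x) => p.comp (mfderiv (𝓡 n) (𝓡 n) g x) : Cot n (g x) → Cot n x) := by
    intro q
    refine ⟨(q : Cot n x).comp (mfderiv (𝓡 n) (𝓡 n) h (g x)), ?_⟩
    ext w
    exact congrArg q (key w)
  have h1 : Lag n H (g x) (mfderiv (𝓡 n) (𝓡 n) g x v)
      = ⨆ p : Cot n (g x), ((p.comp (mfderiv (𝓡 n) (𝓡 n) g x)) v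
          - H x (p.comp (mfderiv (𝓡 n) (𝓡 n) g x))) := by
    unfold Lag
    congr 1
    funext p
    rw [hsym x p]
    rfl
  rw [h1]
  exact hsurj.iSup_comp (fun q : Cot n x => q v - H x q)
set_option linter.unusedSectionVars false

lemma mdiff_ae {γ : ℝ → M} {a b : ℝ} (hab : a ≤ b) (hγ : PiecewiseC1On n γ a b) :
    ∀ᵐ s : ℝ, s ∈ Set.uIoc a b → MDifferentiableAt 𝓘(ℝ, ℝ) (𝓡 n) γ s := by
  obtain ⟨-, k, t, hmono, ht0, htl, hpc⟩ := hγ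
  have hcnt : (Set.range t).Countable := (Set.finite_range t).countable
  filter_upwards [hcnt.ae_notMem MeasureTheory.volume] with s hs hsI
  rw [Set.uIoc_of_le hab] at hsI
  have hs0 : t 0 < s := ht0 ▸ hsI.1
  have hsb : s < t (Fin.last k) := lt_of_le_of_ne (htl ▸ hsI.2) (fun h => hs ⟨_, h.symm⟩)
  classical
  set J : Finset (Fin (k + 1)) := Finset.univ.filter (fun j => t j < s) with hJ
  have hne : J.Nonempty := ⟨0, by simp [hJ, hs0]⟩
  set i0 := J.max' hne with hi0
  have hti0 : t i0 < s := by
    have := J.max'_mem hne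
    simpa [hJ] using this
  have hi0lt : (i0 : ℕ) < k := by
    rcases lt_or_eq_of_le (Fin.le_last i0) with hlt | heq
    · exact hlt
    · exfalso; rw [heq] at hti0; exact absurd hti0 (not_lt.mpr hsb.le)
  set i : Fin k := ⟨(i0 : ℕ), hi0lt⟩ with hi
  have hc : i.castSucc = i0 := rfl
  have hnext : s < t i.succ := by
    rcases lt_trichotomy (t i.succ) s with hlt | heq | hgt
    · have hmem : i.succ ∈ J := by simp [hJ, hlt]
      have hle := J.le_max' _ hmem
      have : i.castSucc < i.succ := Fin.castSucc_lt_succ (i := i)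
      rw [hc] at this
      exact absurd hle (not_le.mpr this)
    · exact absurd heq (fun h => hs ⟨_, h⟩)
    · exact hgt
  exact ((hpc i).contMDiffAt (Icc_mem_nhds (hc ▸ hti0) hnext)).mdifferentiableAt one_ne_zero

lemma vel_comp {g : M → M} (hgd : MDifferentiable (𝓡 n) (𝓡 n) g) {γ : ℝ → M} {s : ℝ}
    (hγ : MDifferentiableAt 𝓘(ℝ, ℝ) (𝓡 n) γ s) :
    vel n (g ∘ γ) s = mfderiv (𝓡 n) (𝓡 n) g (γ s) (vel n γ s) := by
  unfold vel
  rw [mfderiv_comp s (hgd (γ s)) hγ]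
  rfl

lemma action_comp (H : ∀ x : M, Cot n x → ℝ) {g : M → M} (hgsym : IsSymmetry n H g)
    {γ : ℝ → M} {a b : ℝ} (hab : a ≤ b) (hγ : PiecewiseC1On n γ a b) :
    action n (Lag n H) (g ∘ γ) a b = action n (Lag n H) γ a b := by
  have hgd : MDifferentiable (𝓡 n) (𝓡 n) g := by
    obtain ⟨h, hlh, hrh, hg1, hh1⟩ := hgsym.1
    exact hg1.mdifferentiable one_ne_zero
  apply intervalIntegral.integral_congr_ae
  filter_upwards [mdiff_ae n hab hγ] with s hds hsI
  have hd := hds hsI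
  show Lag n H ((g ∘ γ) s) (vel n (g ∘ γ) s) = Lag n H (γ s) (vel n γ s)
  rw [vel_comp n hgd hd]
  exact lag_comp_eq n H hgsym (γ s) (vel n γ s)

lemma piecewise_comp {g : M → M} (hg1 : ContMDiff (𝓡 n) (𝓡 n) 1 g)
    {γ : ℝ → M} {a b : ℝ} (hγ : PiecewiseC1On n γ a b) : PiecewiseC1On n (g ∘ γ) a b := by
  obtain ⟨hcont, k, t, h1, h2, h3, h4⟩ := hγ
  exact ⟨hg1.continuous.comp_continuousOn hcont, k, t, h1, h2, h3,
    fun i => hg1.comp_contMDiffOn (h4 i)⟩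

lemma dominated_comp (H : ∀ x : M, Cot n x → ℝ) (c : ℝ) (u : M → ℝ)
    (hu : Dominated n (Lag n H) c u) {g : M → M} (hgsym : IsSymmetry n H g) :
    ∀ (γ : ℝ → M) (a b : ℝ), a ≤ b → PiecewiseC1On n γ a b →
      u (g (γ b)) - u (g (γ a)) ≤ action n (Lag n H) γ a b + c * (b - a) := by
  intro γ a b hab hpc
  obtain ⟨h, hlh, hrh, hg1, hh1⟩ := hgsym.1
  have h1 := hu (g ∘ γ) a b hab (piecewise_comp n hg1 hpc)
  rwa [action_comp n H hgsym hab hpc] at h1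

/-- Averaging with respect to the normalized Haar probability measure `λ`
of the compact group `Γ_H` (characterized by: `λ` is a Borel probability measure on
`C⁰(M,M)` giving full mass to `Γ_H` and invariant under left and right translations by
elements of `Γ_H`) sends a function `u ∈ C⁰(M,ℝ)` dominated by `L + c` to a continuous
`Γ_H`-invariant function, still dominated by `L + c`. -/
theorem invariant_mean_preserves_domination
    [CompactSpace M] [T2Space M] [ConnectedSpace M]
    [MeasurableSpace C(M, M)] [BorelSpace C(M, M)]
    (H : ∀ x : M, Cot n x → ℝ)
    (hsmooth : SmoothHam n H) (hconv : StrictlyConvexFib n H) (hsuper : Superlinear n H)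
    (lam : MeasureTheory.Measure C(M, M)) [MeasureTheory.IsProbabilityMeasure lam]
    (hfull : lam (GammaH n H) = 1)
    (hleft : ∀ g₀ ∈ GammaH n H,
      MeasureTheory.Measure.map (fun h : C(M, M) => g₀.comp h) lam = lam)
    (hright : ∀ g₀ ∈ GammaH n H,
      MeasureTheory.Measure.map (fun h : C(M, M) => h.comp g₀) lam = lam)
    (c : ℝ) (u : M → ℝ) (hu_cont : Continuous u) (hu : Dominated n (Lag n H) c u) :
    Continuous (fun x : M => ∫ g : C(M, M), u (g x) ∂lam) ∧
      (∀ g ∈ GammaH n H, ∀ x : M,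
        (∫ g' : C(M, M), u (g' (g x)) ∂lam) = ∫ g' : C(M, M), u (g' x) ∂lam) ∧
      Dominated n (Lag n H) c (fun x : M => ∫ g : C(M, M), u (g x) ∂lam) := by
  obtain ⟨C, hC⟩ := (isCompact_univ (X := M)).exists_bound_of_continuousOn hu_cont.continuousOn
  have meas_eval : ∀ x : M,
      MeasureTheory.AEStronglyMeasurable (fun g : C(M, M) => u (g x)) lam := fun x =>
    (hu_cont.comp (continuous_eval_const x)).aestronglyMeasurable
  have int_eval : ∀ x : M, MeasureTheory.Integrable (fun g : C(M, M) => u (g x)) lam := by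
    intro x
    exact (MeasureTheory.integrable_const C).mono' (meas_eval x)
      (Filter.Eventually.of_forall fun g => hC (g x) trivial)
  refine ⟨?_, ?_, ?_⟩
  · haveI : TopologicalSpace.MetrizableSpace M := Manifold.metrizableSpace (𝓡 n) M
    haveI : FirstCountableTopology M := inferInstance
    exact MeasureTheory.continuous_of_dominated meas_eval
      (fun x => Filter.Eventually.of_forall fun g => hC (g x) trivial)
      (MeasureTheory.integrable_const C)
      (Filter.Eventually.of_forall fun g => hu_cont.comp g.continuous)
  · intro g hg x
    have hT : Measurable (fun h : C(M, M) => h.comp g) :=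
      (ContinuousMap.continuous_precomp g).measurable
    have hmap := hright g hg
    have step : (∫ g' : C(M, M), u (g' x) ∂lam)
        = ∫ h : C(M, M), u ((h.comp g) x) ∂lam := by
      conv_lhs => rw [← hmap]
      exact MeasureTheory.integral_map hT.aemeasurable (by rw [hmap]; exact meas_eval x)
    rw [step]
    rfl
  · intro γ a b hab hpc
    set A := action n (Lag n H) γ a b with hA
    have hgood : ∀ g ∈ GammaH n H,
        u (g (γ b)) - u (g (γ a)) ≤ A + c * (b - a) := fun g hg =>
      dominated_comp n H c u hu hg γ a b hab hpc
    set P : Set C(M, M) := {g : C(M, M) | u (g (γ b)) - u (g (γ a)) ≤ A + c * (b - a)} with hP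
    have hPclosed : IsClosed P := isClosed_le
      (((hu_cont.comp (continuous_eval_const (γ b)))).sub
        ((hu_cont.comp (continuous_eval_const (γ a)))))
      continuous_const
    have hP1 : lam P = 1 := le_antisymm MeasureTheory.prob_le_one
      (hfull ▸ MeasureTheory.measure_mono hgood)
    have hae : ∀ᵐ g ∂lam, u (g (γ b)) - u (g (γ a)) ≤ A + c * (b - a) := by
      rw [MeasureTheory.ae_iff]
      have hcompl := MeasureTheory.measure_compl hPclosed.measurableSet
        (MeasureTheory.measure_ne_top lam P)
      rw [hP1, MeasureTheory.measure_univ] at hcompl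
      simpa [hP, Set.compl_setOf] using hcompl
    have hdiff : (∫ g : C(M, M), u (g (γ b)) ∂lam) - ∫ g : C(M, M), u (g (γ a)) ∂lam
        = ∫ g : C(M, M), (u (g (γ b)) - u (g (γ a))) ∂lam :=
      (MeasureTheory.integral_sub (int_eval (γ b)) (int_eval (γ a))).symm
    rw [hdiff]
    calc (∫ g : C(M, M), (u (g (γ b)) - u (g (γ a))) ∂lam)
        ≤ ∫ _g : C(M, M), (A + c * (b - a)) ∂lam :=
          MeasureTheory.integral_mono_ae ((int_eval (γ b)).sub (int_eval (γ a)))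
            (MeasureTheory.integrable_const _) hae
      _ = A + c * (b - a) := by
          simp [MeasureTheory.integral_const, MeasureTheory.measure_univ]

end WeakKAM
end
end

section
/- The Hamilton–Jacobi equation of the spherical pendulum has no classical solutions: for n ≥ 1 there is no C¹ function u: S^n → ℝ and constant c ∈ ℝ such that ½‖d_xu‖² + x_{n+1} = c for all x ∈ S^n, where ‖d_xu‖ denotes the norm of the differential of u at x as a linear functional on T_xS^n (with the Euclidean inner product). -/
open Set

noncomputable section

namespace SphericalPendulum

variable (n : ℕ)

/-- The ambient Euclidean space `ℝ^{n+1}`. -/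
abbrev Amb := EuclideanSpace ℝ (Fin (n + 1))

/-- The unit sphere `S^n ⊂ ℝ^{n+1}`. -/
abbrev Sph := Metric.sphere (0 : Amb n) 1

/-- The last coordinate `x_{n+1}` of a point of `ℝ^{n+1}`. -/
def lastCoord (x : Amb n) : ℝ := x (Fin.last n)

/-- The spherical-pendulum Lagrangian `L(x,v) = ½‖v‖² − x_{n+1}`. -/
def Lsph (x v : Amb n) : ℝ := ‖v‖ ^ 2 / 2 - lastCoord n x

/-- Velocity of a curve in the sphere, computed in the ambient space. -/
def sVel (γ : ℝ → Sph n) (s : ℝ) : Amb n := deriv (fun t : ℝ => (γ t : Amb n)) s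

/-- Piecewise `C¹` curve `γ : [a,b] → S^n`. -/
def sPiecewiseC1On (γ : ℝ → Sph n) (a b : ℝ) : Prop :=
  ContinuousOn (fun t : ℝ => (γ t : Amb n)) (Icc a b) ∧
    ∃ (k : ℕ) (t : Fin (k + 1) → ℝ), StrictMono t ∧ t 0 = a ∧ t (Fin.last k) = b ∧
      ∀ i : Fin k, ContDiffOn ℝ 1 (fun s : ℝ => (γ s : Amb n))
        (Icc (t i.castSucc) (t i.succ))

/-- The action `A_L(γ) = ∫_a^b L(γ(s), γ̇(s)) ds` of a curve `γ : [a,b] → S^n`. -/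
def sAction (γ : ℝ → Sph n) (a b : ℝ) : ℝ :=
  ∫ s in a..b, Lsph n (γ s : Amb n) (sVel n γ s)

/-- `u ≺ L + c` : `u` is dominated by `L + c`. -/
def sDominated (c : ℝ) (u : Sph n → ℝ) : Prop :=
  ∀ (γ : ℝ → Sph n) (a b : ℝ), a ≤ b → sPiecewiseC1On n γ a b →
    u (γ b) - u (γ a) ≤ sAction n γ a b + c * (b - a)

/-- The weak KAM solution `u₊(x) = ∫_{x_{n+1}}^1 √((2−2s)/(1−s²)) ds`. -/
def uPlus (x : Sph n) : ℝ :=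
  ∫ s in (lastCoord n (x : Amb n))..1, Real.sqrt ((2 - 2 * s) / (1 - s ^ 2))

/-- Backward weak KAM solution for the value `c`, for the spherical pendulum. -/
def sBackwardWeakKAM (c : ℝ) (u : Sph n → ℝ) : Prop :=
  sDominated n c u ∧
    ∀ x : Sph n, ∃ γ : ℝ → Sph n, γ 0 = x ∧
      ContDiffOn ℝ 1 (fun s : ℝ => (γ s : Amb n)) (Iic 0) ∧
      ∀ t : ℝ, 0 ≤ t → u x - u (γ (-t)) = sAction n γ (-t) 0 + c * t

/-- The north pole `N = (0,…,0,1) ∈ S^n`. -/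
def northPole : Sph n :=
  ⟨EuclideanSpace.single (Fin.last n) (1 : ℝ), by simp⟩

/-- The Hamilton–Jacobi equation of the spherical pendulum has no
classical (`C¹`) solution: there is no `C¹` function `u` on `S^n` (equivalently, no `C¹`
function on an open neighborhood of `S^n` in `ℝ^{n+1}`) and no constant `c` such that
`½‖d_xu‖² + x_{n+1} = c` on `S^n`, where `‖d_xu‖` is the norm of the differential of `u`
restricted to the tangent space `T_xS^n = {v : ⟨x,v⟩ = 0}`, i.e. the norm of the
tangential component `∇u(x) − ⟨x, ∇u(x)⟩x` of the gradient of `u`.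

At a local extremum of `u` on the sphere, the gradient is radial. -/
lemma grad_radial {U : Set (Amb n)} {u : Amb n → ℝ} (hU : IsOpen U)
    (hsub : (Sph n : Set (Amb n)) ⊆ U) (hu : ContDiffOn ℝ 1 u U)
    {x : Amb n} (hx : x ∈ Sph n) (hext : IsExtrOn u (Sph n : Set (Amb n)) x) :
    gradient u x - (inner ℝ x (gradient u x) : ℝ) • x = 0 := by
  have hxU : x ∈ U := hsub hx
  have hxn : ‖x‖ = 1 := by simpa using (mem_sphere_zero_iff_norm.mp hx)
  have hst : HasStrictFDerivAt u (fderiv ℝ u x) x :=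
    (hu.contDiffAt (hU.mem_nhds hxU)).hasStrictFDerivAt one_ne_zero
  have hcon : HasStrictFDerivAt (fun y : Amb n => ‖y‖ ^ 2) (2 • (innerSL ℝ x)) x :=
    hasStrictFDerivAt_norm_sq x
  have hsetv : {y : Amb n | ‖y‖ ^ 2 = ‖x‖ ^ 2} = (Sph n : Set (Amb n)) := by
    ext y
    simp only [mem_setOf_eq, mem_sphere_iff_norm, sub_zero, hxn, one_pow]
    constructor
    · intro h; nlinarith [norm_nonneg y]
    · intro h; rw [h]; norm_num
  have hlex : IsLocalExtrOn u {y : Amb n | ‖y‖ ^ 2 = ‖x‖ ^ 2} x := by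
    rw [hsetv]; exact hext.localize
  obtain ⟨a, b, hab, heq⟩ := hlex.exists_multipliers_of_hasStrictFDerivAt_1d hcon hst
  -- a • (2 • innerSL x) + b • fderiv u x = 0
  have hb : b ≠ 0 := by
    intro hb0
    subst hb0
    have ha : a ≠ 0 := by
      intro h; apply hab; simp [h]
    have := congrFun (congrArg (fun L : Amb n →L[ℝ] ℝ => (L : Amb n → ℝ)) heq) x
    simp only [ContinuousLinearMap.add_apply, ContinuousLinearMap.smul_apply,
      ContinuousLinearMap.zero_apply, ContinuousLinearMap.coe_smul', Pi.smul_apply, smul_eq_mul,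
      ContinuousLinearMap.coe_zero, Pi.zero_apply, zero_mul, mul_zero, add_zero,
      innerSL_apply_apply] at this
    have hxx : (inner ℝ x x : ℝ) = 1 := by
      rw [real_inner_self_eq_norm_sq, hxn]; norm_num
    rw [two_smul] at this
    simp only [ContinuousLinearMap.add_apply, innerSL_apply_apply, hxx] at this
    apply ha
    nlinarith [this]
  -- fderiv u x = λ ⟪x, ·⟫ with λ = -2a/b
  have hfd : ∀ v : Amb n, fderiv ℝ u x v = (-(2 * a / b)) * (inner ℝ x v : ℝ) := by
    intro v
    have h := ContinuousLinearMap.ext_iff.mp heq v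
    simp only [ContinuousLinearMap.add_apply, ContinuousLinearMap.smul_apply, smul_eq_mul,
      two_smul, innerSL_apply_apply, ContinuousLinearMap.zero_apply] at h
    set ip := (inner ℝ x v : ℝ) with hip
    set d := fderiv ℝ u x v with hd
    field_simp
    linarith
  have hgrad : ∀ v : Amb n, (inner ℝ (gradient u x) v : ℝ) = fderiv ℝ u x v := by
    intro v
    simp [gradient, InnerProductSpace.toDual_symm_apply]
  set g := gradient u x with hg
  set lam : ℝ := -(2 * a / b) with hlam
  have hkey : ∀ v : Amb n, (inner ℝ (g - lam • x) v : ℝ) = 0 := by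
    intro v
    rw [inner_sub_left, real_inner_smul_left, hgrad v, hfd v]
    ring
  have hzero : g - lam • x = 0 := by
    have := hkey (g - lam • x)
    rwa [inner_self_eq_zero] at this
  have hgl : g = lam • x := by
    have := sub_eq_zero.mp hzero; exact this
  have hip : (inner ℝ x g : ℝ) = lam := by
    rw [hgl, real_inner_smul_right, real_inner_self_eq_norm_sq, hxn]; ring
  rw [hip, hgl, sub_self]

lemma single_mem_sph (r : ℝ) (hr : |r| = 1) :
    (EuclideanSpace.single (Fin.last n) r) ∈ Sph n := by
  simp [EuclideanSpace.norm_single, hr]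

lemma lastCoord_single (r : ℝ) :
    lastCoord n (EuclideanSpace.single (Fin.last n) r) = r := by
  simp [lastCoord, EuclideanSpace.single_apply]

lemma sum_sq_eq_one {x : Amb n} (hx : x ∈ Sph n) :
    ∑ i, x i ^ 2 = 1 := by
  have hxn : ‖x‖ = 1 := by simpa using (mem_sphere_zero_iff_norm.mp hx)
  have h := EuclideanSpace.norm_eq x
  rw [hxn] at h
  have h2 : (∑ i, ‖x i‖ ^ 2) = 1 := Real.sqrt_eq_one.mp h.symm
  simpa [sq_abs] using h2

lemma lastCoord_le_one {x : Amb n} (hx : x ∈ Sph n) : lastCoord n x ≤ 1 := by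
  have hs := sum_sq_eq_one n hx
  have hle : x (Fin.last n) ^ 2 ≤ 1 := by
    rw [← hs]
    exact Finset.single_le_sum (fun i _ => sq_nonneg (x i)) (Finset.mem_univ _)
  unfold lastCoord
  nlinarith [hle]

lemma eq_single_of_lastCoord_eq_one {x : Amb n} (hx : x ∈ Sph n)
    (h1 : lastCoord n x = 1) : x = EuclideanSpace.single (Fin.last n) (1 : ℝ) := by
  have hs := sum_sq_eq_one n hx
  have hl : x (Fin.last n) = 1 := h1
  have hrest : ∑ i ∈ Finset.univ.erase (Fin.last n), x i ^ 2 = 0 := by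
    have h2 : x (Fin.last n) ^ 2 + ∑ i ∈ Finset.univ.erase (Fin.last n), x i ^ 2 = 1 := by
      rw [Finset.add_sum_erase _ (fun i => x i ^ 2) (Finset.mem_univ (Fin.last n))]
      exact hs
    rw [hl] at h2
    linarith
  have hzero : ∀ i ∈ Finset.univ.erase (Fin.last n), x i ^ 2 = 0 :=
    (Finset.sum_eq_zero_iff_of_nonneg (fun i _ => sq_nonneg (x i))).mp hrest
  ext i
  by_cases hi : i = Fin.last n
  · subst hi; simp [EuclideanSpace.single_apply, hl]
  · have := hzero i (Finset.mem_erase.mpr ⟨hi, Finset.mem_univ i⟩)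
    have hx0 : x i = 0 := by nlinarith [this]
    simp [EuclideanSpace.single_apply, hi, hx0]

/-- The Hamilton–Jacobi equation of the spherical pendulum has no
classical (`C¹`) solution: there is no `C¹` function `u` on `S^n` (equivalently, no `C¹`
function on an open neighborhood of `S^n` in `ℝ^{n+1}`) and no constant `c` such that
`½‖d_xu‖² + x_{n+1} = c` on `S^n`, where `‖d_xu‖` is the norm of the differential of `u`
restricted to the tangent space `T_xS^n = {v : ⟨x,v⟩ = 0}`, i.e. the norm of the
tangential component `∇u(x) − ⟨x, ∇u(x)⟩x` of the gradient of `u`. -/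
theorem no_classical_solution_of_hamilton_jacobi (hn : 1 ≤ n) :
    ¬ ∃ (U : Set (Amb n)) (u : Amb n → ℝ) (c : ℝ),
        IsOpen U ∧ (Sph n : Set (Amb n)) ⊆ U ∧ ContDiffOn ℝ 1 u U ∧
        ∀ x : Amb n, x ∈ Sph n →
          ‖gradient u x - (inner ℝ x (gradient u x) : ℝ) • x‖ ^ 2 / 2 + lastCoord n x = c := by
  rintro ⟨U, u, c, hU, hsub, hu, hHJ⟩
  have hcomp : IsCompact (Sph n : Set (Amb n)) := isCompact_sphere 0 1
  have hne : (Sph n : Set (Amb n)).Nonempty := NormedSpace.sphere_nonempty.mpr zero_le_one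
  have hcont : ContinuousOn u (Sph n) := hu.continuousOn.mono hsub
  obtain ⟨xm, hxm, hmin⟩ := hcomp.exists_isMinOn hne hcont
  obtain ⟨xM, hxM, hmax⟩ := hcomp.exists_isMaxOn hne hcont
  -- value of c at extremum points
  have hval : ∀ x : Amb n, x ∈ Sph n → IsExtrOn u (Sph n : Set (Amb n)) x →
      lastCoord n x = c := by
    intro x hx hext
    have hG := grad_radial n hU hsub hu hx hext
    have := hHJ x hx
    rw [hG] at this
    simpa using this
  have hm : lastCoord n xm = c := hval xm hxm hmin.isExtr
  have hM : lastCoord n xM = c := hval xM hxM hmax.isExtr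
  -- north pole gives c ≥ 1
  have hNmem : (EuclideanSpace.single (Fin.last n) (1 : ℝ)) ∈ Sph n :=
    single_mem_sph n 1 (by norm_num)
  have hN := hHJ _ hNmem
  rw [lastCoord_single] at hN
  have hc1 : 1 ≤ c := by nlinarith [sq_nonneg ‖gradient u (EuclideanSpace.single (Fin.last n) (1:ℝ)) - (inner ℝ (EuclideanSpace.single (Fin.last n) (1:ℝ)) (gradient u (EuclideanSpace.single (Fin.last n) (1:ℝ))) : ℝ) • (EuclideanSpace.single (Fin.last n) (1:ℝ))‖]
  have hceq : c = 1 := le_antisymm (hm ▸ lastCoord_le_one n hxm) hc1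
  -- both extremum points are the north pole, so u is constant on the sphere
  have hxmN : xm = EuclideanSpace.single (Fin.last n) (1 : ℝ) :=
    eq_single_of_lastCoord_eq_one n hxm (by rw [hm, hceq])
  have hxMN : xM = EuclideanSpace.single (Fin.last n) (1 : ℝ) :=
    eq_single_of_lastCoord_eq_one n hxM (by rw [hM, hceq])
  have huconst : ∀ x ∈ (Sph n : Set (Amb n)), u x = u xm := by
    intro x hx
    have h1 : u xm ≤ u x := hmin hx
    have h2 : u x ≤ u xM := hmax hx
    rw [hxMN, ← hxmN] at h2
    linarith
  -- hence every point of the sphere is a max point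
  have hallmax : ∀ x ∈ (Sph n : Set (Amb n)), IsMaxOn u (Sph n : Set (Amb n)) x := by
    intro x hx y hy
    simp only [mem_setOf_eq]
    rw [huconst y hy, huconst x hx]
  -- south pole gives c = -1, contradiction
  have hSmem : (EuclideanSpace.single (Fin.last n) (-1 : ℝ)) ∈ Sph n :=
    single_mem_sph n (-1) (by norm_num)
  have hS : lastCoord n (EuclideanSpace.single (Fin.last n) (-1 : ℝ)) = c :=
    hval _ hSmem (hallmax _ hSmem).isExtr
  rw [lastCoord_single] at hS
  rw [hceq] at hS
  norm_num at hS


end SphericalPendulum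
end
end
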